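/- Let f(n) = eⁿ. For every n ≥ 2 and every tree T with n leaves, δ_{eⁿ}(T) ≤ eⁿ + n, with equality if and only if T is isomorphic to the star FS_n. Hence the largest eⁿ-size of a tree in 𝒯*_n is eⁿ + n, and it is reached exactly at the star. -/

import Mathlib

/-- Rooted trees encoded as a root together with the list of subtrees
rooted at its children. -/
inductive MTree : Type
  | node : List MTree → MTree

namespace MTree

/-- Number of leaves of a tree (a single node counts as one leaf). -/
def leafCount : MTree → ℕ
  | node ts => max 1 (ts.attach.map (fun x => leafCount x.1)).sum
decreasing_by
  have := List.sizeOf_lt_of_mem x.2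
  simp only [node.sizeOf_spec]; omega

/-- `deltaF f T = Σ_{v ∈ V(T)} f (deg v)`, the `f`-size of `T`. -/
noncomputable def deltaF (f : ℕ → ℝ) : MTree → ℝ
  | node ts => f ts.length + (ts.attach.map (fun x => deltaF f x.1)).sum
decreasing_by
  have := List.sizeOf_lt_of_mem x.2
  simp only [node.sizeOf_spec]; omega

/-- The Colless-like index relative to a "dissimilarity" `D` and a function `f`:
the sum, over all internal nodes `v`, of `D` applied to the list of `f`-sizes of
the subtrees rooted at the children of `v`. -/
noncomputable def cIndex (D : List ℝ → ℝ) (f : ℕ → ℝ) : MTree → ℝ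
  | node ts => (if ts.isEmpty then 0 else D (ts.map (deltaF f)))
      + (ts.attach.map (fun x => cIndex D f x.1)).sum
decreasing_by
  have := List.sizeOf_lt_of_mem x.2
  simp only [node.sizeOf_spec]; omega

/-- The Colless index of a (bifurcating) tree: the sum over the internal nodes of the
absolute value of the difference of the numbers of leaves of the two child subtrees. -/
def colless : MTree → ℕ
  | node ts =>
      (match ts with
       | [a, b] => ((a.leafCount : ℤ) - (b.leafCount : ℤ)).natAbs
       | _ => 0)
      + (ts.attach.map (fun x => colless x.1)).sum
decreasing_by
  have := List.sizeOf_lt_of_mem x.2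
  simp only [node.sizeOf_spec]; omega

/-- The quadratic Colless index of a (bifurcating) tree. -/
def collessSq : MTree → ℕ
  | node ts =>
      (match ts with
       | [a, b] => ((a.leafCount : ℤ) - (b.leafCount : ℤ)).natAbs ^ 2
       | _ => 0)
      + (ts.attach.map (fun x => collessSq x.1)).sum
decreasing_by
  have := List.sizeOf_lt_of_mem x.2
  simp only [node.sizeOf_spec]; omega

/-- A tree in the sense of the paper: no node of out-degree 1. -/
inductive WellFormed : MTree → Prop
  | node {ts : List MTree} : ts.length ≠ 1 → (∀ t ∈ ts, WellFormed t) →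
      WellFormed (node ts)

/-- A bifurcating tree: every internal node has out-degree exactly 2. -/
inductive Bifurcating : MTree → Prop
  | node {ts : List MTree} : (ts.length = 0 ∨ ts.length = 2) →
      (∀ t ∈ ts, Bifurcating t) → Bifurcating (node ts)

/-- Isomorphism of (list-encoded) trees: the lists of child subtrees match up to
a permutation and recursively isomorphic subtrees. -/
inductive Iso : MTree → MTree → Prop
  | node {ts us vs : List MTree} :
      List.Forall₂ Iso ts vs → vs.Perm us → Iso (node ts) (node us)

/-- A tree is fully symmetric when, for every internal node, the subtrees rooted at
its children are pairwise isomorphic. -/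
inductive FullySymmetric : MTree → Prop
  | node {ts : List MTree} : (∀ s ∈ ts, ∀ t ∈ ts, Iso s t) →
      (∀ t ∈ ts, FullySymmetric t) → FullySymmetric (node ts)

/-- The comb `K_n` with `n ≥ 1` leaves. -/
def comb : ℕ → MTree
  | 0 => node []
  | 1 => node []
  | n + 2 => node [node [], comb (n + 1)]

/-- The star `FS_n`, whose root has `n` children, all of them leaves. -/
def star (n : ℕ) : MTree := node (List.replicate n (node []))

/-- The median of a list of real numbers. -/
noncomputable def median (l : List ℝ) : ℝ :=
  let s := l.mergeSort (fun a b => a ≤ b)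
  if l.length % 2 = 1 then s.getD (l.length / 2) 0
  else (s.getD (l.length / 2 - 1) 0 + s.getD (l.length / 2) 0) / 2

/-- The mean deviation from the median of a list of real numbers. -/
noncomputable def MDM (l : List ℝ) : ℝ :=
  (l.map (fun x => |x - median l|)).sum / l.length

/-- The sample variance of a list of real numbers. -/
noncomputable def svar (l : List ℝ) : ℝ :=
  (l.map (fun x => (x - l.sum / l.length) ^ 2)).sum / ((l.length : ℝ) - 1)

/-- The sample standard deviation of a list of real numbers. -/
noncomputable def ssd (l : List ℝ) : ℝ := Real.sqrt (svar l)

end MTree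
namespace MTree

/-- Auxiliary: is this tree a single leaf? -/
def isLeaf : MTree → Bool
  | node ts => ts.isEmpty

theorem my_ind (P : MTree → Prop) (h : ∀ ts, (∀ t ∈ ts, P t) → P (node ts)) : ∀ t, P t
  | node ts => h ts (fun t ht => my_ind P h t)
decreasing_by
  have := List.sizeOf_lt_of_mem ht
  simp only [node.sizeOf_spec]; omega

theorem leafCount_node (ts : List MTree) :
    (node ts).leafCount = max 1 (ts.map leafCount).sum := by
  rw [leafCount]; congr 1
  conv_rhs => rw [← List.attach_map_val (l := ts) (f := leafCount)]

theorem deltaF_node (f : ℕ → ℝ) (ts : List MTree) :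
    deltaF f (node ts) = f ts.length + (ts.map (deltaF f)).sum := by
  rw [deltaF]; congr 1
  conv_rhs => rw [← List.attach_map_val (l := ts) (f := deltaF f)]

theorem one_le_leafCount (t : MTree) : 1 ≤ t.leafCount := by
  cases t with | node ts => rw [leafCount_node]; omega

theorem leafCount_leaf : (node []).leafCount = 1 := by simp [leafCount_node]

theorem leafCount_node_ne (ts : List MTree) (h : ts ≠ []) :
    (node ts).leafCount = (ts.map leafCount).sum := by
  rw [leafCount_node, max_eq_right]
  cases ts with
  | nil => exact absurd rfl h
  | cons a as =>
    simp only [List.map_cons, List.sum_cons]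
    have := one_le_leafCount a
    omega

theorem isLeaf_iff (t : MTree) : t.isLeaf = true ↔ t = node [] := by
  cases t with | node ts =>
    cases ts <;> simp [isLeaf]

theorem deltaF_leaf (f : ℕ → ℝ) : deltaF f (node []) = f 0 := by
  rw [deltaF_node]; simp

theorem two_le_leafCount {t : MTree} (h : WellFormed t) (hl : ¬ t.isLeaf = true) :
    2 ≤ t.leafCount := by
  cases h with
  | @node ts hlen hall =>
    have hne : ts ≠ [] := by
      intro h; subst h; simp [isLeaf] at hl
    rw [leafCount_node_ne ts hne]
    cases ts with
    | nil => exact absurd rfl hne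
    | cons a as =>
      cases as with
      | nil => simp at hlen
      | cons b bs =>
        simp only [List.map_cons, List.sum_cons]
        have := one_le_leafCount a
        have := one_le_leafCount b
        omega

theorem iso_leaf {t : MTree} (h : Iso t (node [])) : t = node [] := by
  cases h with
  | @node ts us vs h1 h2 =>
    have hvs : vs = [] := h2.eq_nil
    subst hvs
    have : ts = [] := (List.forall₂_nil_right_iff.mp h1)
    rw [this]

theorem forall₂_replicate {ts : List MTree} {n : ℕ}
    (h : List.Forall₂ Iso ts (List.replicate n (node []))) :
    ts = List.replicate n (node []) := by
  induction ts generalizing n with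
  | nil =>
    cases n with
    | zero => rfl
    | succ n => rw [List.replicate_succ] at h; cases h
  | cons a as ih =>
    cases n with
    | zero => cases h
    | succ n =>
      rw [List.replicate_succ] at h ⊢
      cases h with
      | cons hab htl => rw [iso_leaf hab, ih htl]

theorem iso_star {T : MTree} {n : ℕ} (h : Iso T (star n)) : T = star n := by
  cases h with
  | @node ts us vs h1 h2 =>
    have hvs : vs = List.replicate n (node []) := List.perm_replicate.mp h2
    subst hvs
    exact congrArg node (forall₂_replicate h1)

theorem iso_star_self (n : ℕ) : Iso (star n) (star n) := by
  refine Iso.node ?_ (List.Perm.refl _)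
  rw [List.forall₂_same]
  intro x hx
  rw [List.eq_of_mem_replicate hx]
  exact Iso.node List.Forall₂.nil (List.Perm.refl _)

theorem exp_add_exp_lt {a b : ℝ} (ha : 2 ≤ a) (hb : 2 ≤ b) :
    Real.exp a + Real.exp b < Real.exp (a + b - 1) := by
  have h2 : (2 : ℝ) < Real.exp 1 := by
    have := Real.exp_one_gt_d9; linarith
  have h1 : Real.exp a ≤ Real.exp (a + b - 2) := Real.exp_le_exp.2 (by linarith)
  have h1' : Real.exp b ≤ Real.exp (a + b - 2) := Real.exp_le_exp.2 (by linarith)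
  have h3 : Real.exp (a + b - 1) = Real.exp 1 * Real.exp (a + b - 2) := by
    rw [← Real.exp_add]; ring_nf
  nlinarith [Real.exp_pos (a + b - 2)]

theorem expsum (A : List ℝ) (hA : ∀ a ∈ A, 2 ≤ a) : ∀ a0 : ℝ, 2 ≤ a0 →
    (Real.exp a0 + (A.map Real.exp).sum ≤ Real.exp (a0 + A.sum - A.length)) ∧
    (A ≠ [] → Real.exp a0 + (A.map Real.exp).sum < Real.exp (a0 + A.sum - A.length)) := by
  induction A with
  | nil => intro a0 _; simp
  | cons a A ih =>
    intro a0 h0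
    have ha : 2 ≤ a := hA a (by simp)
    have key := exp_add_exp_lt h0 ha
    have ih' := (ih (fun x hx => hA x (by simp [hx])) (a0 + a - 1) (by linarith)).1
    have hs : Real.exp a0 + ((a :: A).map Real.exp).sum
        < Real.exp (a0 + (a :: A).sum - (a :: A).length) := by
      simp only [List.map_cons, List.sum_cons, List.length_cons]
      have heq : a0 + a - 1 + A.sum - A.length = a0 + (a + A.sum) - (A.length + 1) := by
        ring
      push_cast
      calc Real.exp a0 + (Real.exp a + (A.map Real.exp).sum)
          = (Real.exp a0 + Real.exp a) + (A.map Real.exp).sum := by ring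
        _ < Real.exp (a0 + a - 1) + (A.map Real.exp).sum := by linarith
        _ ≤ Real.exp (a0 + a - 1 + A.sum - A.length) := ih'
        _ = Real.exp (a0 + (a + A.sum) - (A.length + 1)) := by rw [heq]
    exact ⟨le_of_lt hs, fun _ => hs⟩

theorem map_add_sum (l : List MTree) (f g : MTree → ℝ) :
    (l.map (fun x => f x + g x)).sum = (l.map f).sum + (l.map g).sum := by
  induction l with
  | nil => simp
  | cons a as ih => simp [ih]; ring

end MTree
namespace MTree

/-- leaf counts of the non-leaf children -/
def intLC (ts : List MTree) : List ℕ := (ts.filter (fun t => !t.isLeaf)).map leafCount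

theorem sumg (ts : List MTree) :
    (ts.map (fun t => if t.isLeaf then 0 else Real.exp t.leafCount)).sum
      = ((intLC ts).map (fun a : ℕ => Real.exp a)).sum := by
  induction ts with
  | nil => simp [intLC]
  | cons t ts ih =>
    by_cases h : t.isLeaf = true <;>
      simp [intLC, List.filter_cons, h, ih]

theorem sumlc (ts : List MTree) (h : ∀ t ∈ ts, t.isLeaf = true → t.leafCount = 1) :
    (ts.map leafCount).sum + (intLC ts).length = ts.length + (intLC ts).sum := by
  induction ts with
  | nil => simp [intLC]
  | cons t ts ih =>
    have ih' := ih (fun x hx hl => h x (by simp [hx]) hl)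
    by_cases hl : t.isLeaf = true
    · have : t.leafCount = 1 := h t (by simp) hl
      simp only [intLC, List.filter_cons, hl] at ih' ⊢
      simp only [List.map_cons, List.sum_cons, List.length_cons, this]
      simp at ih' ⊢
      omega
    · simp only [intLC, List.filter_cons] at ih' ⊢
      simp only [hl] at ih' ⊢
      simp only [List.map_cons, List.sum_cons, List.length_cons]
      simp at ih' ⊢
      omega

theorem intLC_two_le (ts : List MTree) (h : ∀ t ∈ ts, ¬ t.isLeaf = true → 2 ≤ t.leafCount) :
    ∀ a ∈ intLC ts, 2 ≤ a := by
  intro a ha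
  simp only [intLC, List.mem_map, List.mem_filter] at ha
  obtain ⟨t, ⟨ht, hlt⟩, rfl⟩ := ha
  exact h t ht (by simp at hlt; simp [hlt])

theorem intLC_eq_nil (ts : List MTree) :
    intLC ts = [] ↔ ∀ t ∈ ts, t.isLeaf = true := by
  simp [intLC, List.filter_eq_nil_iff]

end MTree
namespace MTree

theorem main_bound : ∀ T : MTree, WellFormed T → ¬ T.isLeaf = true →
    deltaF (fun m => Real.exp m) T ≤ (T.leafCount : ℝ) + Real.exp T.leafCount ∧
    (deltaF (fun m => Real.exp m) T = (T.leafCount : ℝ) + Real.exp T.leafCount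
      ↔ T = star T.leafCount) := by
  refine my_ind _ ?_
  intro ts hrec hwf hnl
  obtain ⟨hlen, hall⟩ : ts.length ≠ 1 ∧ ∀ t ∈ ts, WellFormed t := by
    cases hwf with | node h1 h2 => exact ⟨h1, h2⟩
  have hne : ts ≠ [] := by
    intro h; subst h; simp [isLeaf] at hnl
  have hk : 2 ≤ ts.length := by
    have : ts.length ≠ 0 := fun h => hne (List.length_eq_zero_iff.mp h)
    omega
  set f : ℕ → ℝ := fun m => Real.exp m with hf
  -- per-child facts
  have h1 : ∀ t ∈ ts, t.isLeaf = true → t.leafCount = 1 := by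
    intro t ht hl
    rw [(isLeaf_iff t).mp hl, leafCount_leaf]
  have h2 : ∀ t ∈ ts, ¬ t.isLeaf = true → 2 ≤ t.leafCount :=
    fun t ht hl => two_le_leafCount (hall t ht) hl
  have hδ : ∀ t ∈ ts, deltaF f t ≤ (t.leafCount : ℝ) +
      (if t.isLeaf then 0 else Real.exp t.leafCount) := by
    intro t ht
    by_cases hl : t.isLeaf = true
    · have ht0 := (isLeaf_iff t).mp hl
      subst ht0
      rw [deltaF_leaf, leafCount_leaf]
      simp [hf, isLeaf]
    · rw [if_neg hl]
      exact ((hrec t ht) (hall t ht) hl).1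
  have hℓ : (node ts).leafCount = (ts.map leafCount).sum := leafCount_node_ne ts hne
  have hsplit := sumlc ts h1
  -- main sum bound
  have hsum : (ts.map (deltaF f)).sum ≤ ((ts.map (fun t => (t.leafCount : ℝ))).sum +
      (ts.map (fun t => if t.isLeaf then 0 else Real.exp t.leafCount)).sum) := by
    rw [← map_add_sum]
    exact List.sum_le_sum hδ
  have hlcsum : (ts.map (fun t => (t.leafCount : ℝ))).sum = ((ts.map leafCount).sum : ℝ) := by
    rw [Nat.cast_list_sum, List.map_map]; rfl
  have hδT : deltaF f (node ts) = f ts.length + (ts.map (deltaF f)).sum := deltaF_node f ts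
  by_cases hA : intLC ts = []
  · -- all children are leaves: the star case
    have hleaves : ∀ t ∈ ts, t.isLeaf = true := (intLC_eq_nil ts).mp hA
    have hts : ts = List.replicate ts.length (node []) := by
      rw [List.eq_replicate_iff]
      exact ⟨rfl, fun b hb => (isLeaf_iff b).mp (hleaves b hb)⟩
    have hℓk : (node ts).leafCount = ts.length := by
      rw [hℓ]
      rw [hA] at hsplit
      simpa using hsplit
    have hδval : deltaF f (node ts) = Real.exp ts.length + ts.length := by
      rw [hδT, hf]
      congr 1
      have : ts.map (deltaF f) = List.replicate ts.length 1 := by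
        rw [List.eq_replicate_iff]
        refine ⟨by simp, ?_⟩
        intro b hb
        simp only [List.mem_map] at hb
        obtain ⟨t, ht, rfl⟩ := hb
        rw [(isLeaf_iff t).mp (hleaves t ht), deltaF_leaf]
        simp [hf]
      rw [this, List.sum_replicate]
      simp
    constructor
    · rw [hδval, hℓk]; ring_nf; exact le_refl _
    · rw [hδval, hℓk]
      constructor
      · intro _; rw [star]; exact congrArg node hts
      · intro _; ring
  · -- some child is internal: strict inequality
    have hA2 : ∀ a ∈ intLC ts, 2 ≤ a := intLC_two_le ts h2
    have hstrict := (expsum ((intLC ts).map (fun a : ℕ => (a : ℝ)))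
        (by intro a ha; simp only [List.mem_map] at ha; obtain ⟨b, hb, rfl⟩ := ha
            exact_mod_cast hA2 b hb)
        (ts.length : ℝ) (by exact_mod_cast hk)).2
      (by simp [hA])
    have hAexp : ((intLC ts).map (fun a : ℕ => Real.exp a)).sum
        = (((intLC ts).map (fun a : ℕ => (a : ℝ))).map Real.exp).sum := by
      rw [List.map_map]; rfl
    have hAsum : (((intLC ts).map (fun a : ℕ => (a : ℝ)))).sum = ((intLC ts).sum : ℝ) := by
      rw [Nat.cast_list_sum]
    have hexpo : (ts.length : ℝ) + (((intLC ts).map (fun a : ℕ => (a : ℝ)))).sum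
        - (((intLC ts).map (fun a : ℕ => (a : ℝ)))).length = ((ts.map leafCount).sum : ℝ) := by
      rw [hAsum, List.length_map]
      have : ((ts.map leafCount).sum : ℝ) + (intLC ts).length
          = (ts.length : ℝ) + (intLC ts).sum := by exact_mod_cast hsplit
      linarith
    rw [hexpo] at hstrict
    have hlt : deltaF f (node ts) < ((node ts).leafCount : ℝ) + Real.exp ((node ts).leafCount) := by
      rw [hδT, hℓ]
      calc f ts.length + (ts.map (deltaF f)).sum
          ≤ f ts.length + ((ts.map (fun t => (t.leafCount : ℝ))).sum +
            (ts.map (fun t => if t.isLeaf then 0 else Real.exp t.leafCount)).sum) := by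
            linarith
        _ = ((ts.map leafCount).sum : ℝ) + (Real.exp ts.length +
            ((((intLC ts).map (fun a : ℕ => (a : ℝ)))).map Real.exp).sum) := by
            rw [hlcsum, sumg, hAexp, hf]; ring
        _ < ((ts.map leafCount).sum : ℝ) + Real.exp ((ts.map leafCount).sum : ℝ) := by
            linarith
    constructor
    · exact le_of_lt hlt
    · constructor
      · intro h; exact absurd h (ne_of_lt hlt)
      · intro h
        exfalso
        rw [star] at h
        have hts : ts = List.replicate ((node ts).leafCount) (node []) := node.inj h
        apply hA
        rw [(intLC_eq_nil ts).mpr]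
        intro t ht
        rw [hts] at ht
        rw [List.eq_of_mem_replicate ht]
        simp [isLeaf]

end MTree

/-- The maximum `eⁿ`-size of a tree with `n ≥ 2` leaves is `eⁿ + n`, attained exactly
at the star `FS_n`. -/
theorem deltaF_exp_le_star (n : ℕ) (hn : 2 ≤ n) (T : MTree)
    (hT : T.WellFormed) (hTn : T.leafCount = n) :
    MTree.deltaF (fun m => Real.exp m) T ≤ Real.exp n + n ∧
    (MTree.deltaF (fun m => Real.exp m) T = Real.exp n + n ↔ T.Iso (MTree.star n)) := by
  have hnl : ¬ T.isLeaf = true := by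
    intro h
    rw [(MTree.isLeaf_iff T).mp h, MTree.leafCount_leaf] at hTn
    omega
  have hm := MTree.main_bound T hT hnl
  rw [hTn] at hm
  have hcomm : Real.exp (n : ℝ) + (n : ℝ) = (n : ℝ) + Real.exp n := by ring
  constructor
  · rw [hcomm]; exact hm.1
  · rw [hcomm, hm.2]
    constructor
    · intro h; rw [h]; exact MTree.iso_star_self n
    · intro h; exact MTree.iso_star h
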